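/- For every n and every p with 1 ≤ p ≤ n, for any (p,n) line metric, any spanner with hop-diameter 2 has lightness at least (1/16)·(p²/n). -/

import Mathlib

/-- The `n`-point uniform line metric: the points `i/n` for `0 ≤ i ≤ n-1`. -/
noncomputable def uniformLine (n : ℕ) : Finset ℝ :=
  (Finset.range n).image (fun i : ℕ => (i : ℝ) / n)

/-- A `(p,n)` line metric: `p` points in `[0,1]` such that each interval
`[i/n, (i+1)/n)` contains at most one point. -/
def IsPNLineMetric (P : Finset ℝ) (p n : ℕ) : Prop :=
  P.card = p ∧ (↑P : Set ℝ) ⊆ Set.Icc 0 1 ∧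
    ∀ i < n, (P.filter (fun x => (i : ℝ) / n ≤ x ∧ x < ((i : ℝ) + 1) / n)).card ≤ 1

/-- Total weight of a set of edges between points on the line. -/
noncomputable def lineWeight (H : Finset (ℝ × ℝ)) : ℝ := ∑ e ∈ H, |e.1 - e.2|

/-- `H` joins every pair of points of `P` by a path of at most `k` edges
(hop-diameter `k`). -/
def HopConnected (H : Finset (ℝ × ℝ)) (P : Finset ℝ) (k : ℕ) : Prop :=
  ∀ u ∈ P, ∀ v ∈ P, ∃ l : List ℝ, l.head? = some u ∧ l.getLast? = some v ∧
    l.length ≤ k + 1 ∧ l.Chain' (fun a b => (a, b) ∈ H ∨ (b, a) ∈ H)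

/-- The weight of a minimum spanning tree of a finite set of points on the line:
the diameter `max - min`. -/
noncomputable def mstLine (P : Finset ℝ) : ℝ := sSup (↑P : Set ℝ) - sInf (↑P : Set ℝ)

/-! ### Auxiliary definitions and lemmas -/

noncomputable def incWeight (H : Finset (ℝ × ℝ)) (u : ℝ) : ℝ :=
  ∑ e ∈ H.filter (fun e => e.1 = u ∨ e.2 = u), |e.1 - e.2|

lemma incWeight_nonneg (H : Finset (ℝ × ℝ)) (u : ℝ) : 0 ≤ incWeight H u :=
  Finset.sum_nonneg (fun _ _ => abs_nonneg _)

lemma lineWeight_nonneg (H : Finset (ℝ × ℝ)) : 0 ≤ lineWeight H :=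
  Finset.sum_nonneg (fun _ _ => abs_nonneg _)

lemma edge_le_inc {H : Finset (ℝ × ℝ)} {e : ℝ × ℝ} {u : ℝ} (he : e ∈ H)
    (hu : e.1 = u ∨ e.2 = u) : |e.1 - e.2| ≤ incWeight H u := by
  apply Finset.single_le_sum (f := fun e : ℝ × ℝ => |e.1 - e.2|)
    (fun e _ => abs_nonneg _)
  exact Finset.mem_filter.2 ⟨he, hu⟩

lemma pair_bound {H : Finset (ℝ × ℝ)} {u v : ℝ}
    (h : ∃ l : List ℝ, l.head? = some u ∧ l.getLast? = some v ∧
      l.length ≤ 3 ∧ l.Chain' (fun a b => (a, b) ∈ H ∨ (b, a) ∈ H)) :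
    |u - v| ≤ incWeight H u + incWeight H v := by
  obtain ⟨l, h1, h2, h3, h4⟩ := h
  rcases l with _ | ⟨a, _ | ⟨b, _ | ⟨c, _ | ⟨d, t⟩⟩⟩⟩
  · simp at h1
  · simp at h1 h2
    rw [← h1, ← h2, sub_self, abs_zero]
    exact add_nonneg (incWeight_nonneg H a) (incWeight_nonneg H a)
  · simp [List.Chain'] at h1 h2 h4
    rw [← h1, ← h2]
    have hnn := incWeight_nonneg H b
    have hnn' := incWeight_nonneg H a
    rcases h4 with h4 | h4
    · have := edge_le_inc (u := a) h4 (Or.inl rfl); simp at this; linarith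
    · have := edge_le_inc (u := a) h4 (Or.inr rfl); simp at this
      rw [abs_sub_comm] at this; linarith
  · simp [List.Chain'] at h1 h2 h4
    rw [← h1, ← h2]
    obtain ⟨hab, hbc⟩ := h4
    have e1 : |a - b| ≤ incWeight H a := by
      rcases hab with h | h
      · exact edge_le_inc (u := a) h (Or.inl rfl)
      · have := edge_le_inc (u := a) h (Or.inr rfl); simp at this
        rwa [abs_sub_comm] at this
    have e2 : |b - c| ≤ incWeight H c := by
      rcases hbc with h | h
      · exact edge_le_inc (u := c) h (Or.inr rfl)
      · have := edge_le_inc (u := c) h (Or.inl rfl); simp at this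
        rwa [abs_sub_comm] at this
    calc |a - c| ≤ |a - b| + |b - c| := abs_sub_le _ _ _
      _ ≤ _ := by linarith
  · simp at h3; omega

lemma two_edges_le {H : Finset (ℝ × ℝ)} {e1 e2 : ℝ × ℝ} (h1 : e1 ∈ H) (h2 : e2 ∈ H)
    (hne : e1 ≠ e2) : |e1.1 - e1.2| + |e2.1 - e2.2| ≤ lineWeight H := by
  have hsub : ({e1, e2} : Finset (ℝ × ℝ)) ⊆ H := by
    intro x hx; simp at hx; rcases hx with rfl | rfl <;> assumption
  have := Finset.sum_le_sum_of_subset_of_nonneg (f := fun e : ℝ × ℝ => |e.1 - e.2|) hsub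
    (fun _ _ _ => abs_nonneg _)
  rwa [Finset.sum_pair hne] at this

lemma pair_le_weight {H : Finset (ℝ × ℝ)} {u v : ℝ}
    (h : ∃ l : List ℝ, l.head? = some u ∧ l.getLast? = some v ∧
      l.length ≤ 3 ∧ l.Chain' (fun a b => (a, b) ∈ H ∨ (b, a) ∈ H)) :
    |u - v| ≤ lineWeight H := by
  obtain ⟨l, h1, h2, h3, h4⟩ := h
  rcases l with _ | ⟨a, _ | ⟨b, _ | ⟨c, _ | ⟨d, t⟩⟩⟩⟩
  · simp at h1
  · simp at h1 h2
    rw [← h1, ← h2, sub_self, abs_zero]; exact lineWeight_nonneg H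
  · simp [List.Chain'] at h1 h2 h4
    rw [← h1, ← h2]
    rcases h4 with h4 | h4
    · have := Finset.single_le_sum (f := fun e : ℝ × ℝ => |e.1 - e.2|)
        (fun e _ => abs_nonneg _) h4
      simpa [lineWeight] using this
    · have := Finset.single_le_sum (f := fun e : ℝ × ℝ => |e.1 - e.2|)
        (fun e _ => abs_nonneg _) h4
      simp at this; rwa [abs_sub_comm]
  · simp [List.Chain'] at h1 h2 h4
    rw [← h1, ← h2]
    by_cases hac : a = c
    · rw [hac, sub_self, abs_zero]; exact lineWeight_nonneg H
    obtain ⟨hab, hbc⟩ := h4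
    have tri : |a - c| ≤ |a - b| + |b - c| := abs_sub_le _ _ _
    rcases hab with hab | hab <;> rcases hbc with hbc | hbc
    · have hne : (a, b) ≠ (b, c) := by
        intro h; rw [Prod.mk.injEq] at h; exact hac (h.1.trans h.2)
      have := two_edges_le hab hbc hne; simp at this; linarith
    · have hne : (a, b) ≠ (c, b) := by
        intro h; rw [Prod.mk.injEq] at h; exact hac h.1
      have := two_edges_le hab hbc hne; simp at this
      rw [abs_sub_comm c b] at this; linarith
    · have hne : (b, a) ≠ (b, c) := by
        intro h; rw [Prod.mk.injEq] at h; exact hac h.2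
      have := two_edges_le hab hbc hne; simp at this
      rw [abs_sub_comm b a] at this; linarith
    · have hne : (b, a) ≠ (c, b) := by
        intro h; rw [Prod.mk.injEq] at h; exact hac (h.2.trans h.1)
      have := two_edges_le hab hbc hne; simp at this
      rw [abs_sub_comm b a, abs_sub_comm c b] at this; linarith
  · simp at h3; omega

lemma sum_inc_le (H : Finset (ℝ × ℝ)) (P : Finset ℝ) :
    ∑ u ∈ P, incWeight H u ≤ 2 * lineWeight H := by
  unfold incWeight lineWeight
  rw [Finset.mul_sum]
  calc ∑ u ∈ P, ∑ e ∈ H.filter (fun e => e.1 = u ∨ e.2 = u), |e.1 - e.2|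
      = ∑ u ∈ P, ∑ e ∈ H, if e.1 = u ∨ e.2 = u then |e.1 - e.2| else 0 := by
        refine Finset.sum_congr rfl (fun u _ => ?_)
        rw [Finset.sum_filter]
    _ = ∑ e ∈ H, ∑ u ∈ P, if e.1 = u ∨ e.2 = u then |e.1 - e.2| else 0 :=
        Finset.sum_comm
    _ ≤ ∑ e ∈ H, 2 * |e.1 - e.2| := by
        refine Finset.sum_le_sum (fun e _ => ?_)
        rw [← Finset.sum_filter]
        have hsub : P.filter (fun u => e.1 = u ∨ e.2 = u) ⊆ {e.1, e.2} := by
          intro x hx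
          simp at hx ⊢
          rcases hx.2 with h | h
          · exact Or.inl h.symm
          · exact Or.inr h.symm
        calc ∑ _u ∈ P.filter (fun u => e.1 = u ∨ e.2 = u), |e.1 - e.2|
            = (P.filter (fun u => e.1 = u ∨ e.2 = u)).card * |e.1 - e.2| := by
              rw [Finset.sum_const, nsmul_eq_mul]
          _ ≤ 2 * |e.1 - e.2| := by
              have hc : (P.filter (fun u => e.1 = u ∨ e.2 = u)).card ≤ 2 := by
                have := Finset.card_le_card hsub
                have h2 : ({e.1, e.2} : Finset ℝ).card ≤ 2 :=
                  Finset.card_insert_le _ _ |>.trans (by simp)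
                omega
              have : ((P.filter (fun u => e.1 = u ∨ e.2 = u)).card : ℝ) ≤ 2 := by
                exact_mod_cast hc
              exact mul_le_mul_of_nonneg_right this (abs_nonneg _)

def dd (k l : ℕ) : ℕ := (l - k - 1) + (k - l - 1)

def TT (p : ℕ) : ℕ := ∑ k ∈ Finset.range p, ∑ l ∈ Finset.range p, dd k l

lemma TT_succ (p : ℕ) : TT (p + 1) = TT p + 2 * ∑ k ∈ Finset.range p, k := by
  unfold TT
  rw [Finset.sum_range_succ]
  have h1 : ∀ k ∈ Finset.range p, ∑ l ∈ Finset.range (p+1), dd k l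
      = (∑ l ∈ Finset.range p, dd k l) + dd k p := by
    intro k _; rw [Finset.sum_range_succ]
  rw [Finset.sum_congr rfl h1, Finset.sum_add_distrib, Finset.sum_range_succ]
  have h2 : ∑ k ∈ Finset.range p, dd k p = ∑ k ∈ Finset.range p, k := by
    have : ∀ k ∈ Finset.range p, dd k p = p - 1 - k := by
      intro k hk; simp at hk; unfold dd; omega
    rw [Finset.sum_congr rfl this]
    exact Finset.sum_range_reflect (fun j => j) p
  have h3 : ∑ l ∈ Finset.range p, dd p l = ∑ l ∈ Finset.range p, l := by
    have : ∀ l ∈ Finset.range p, dd p l = p - 1 - l := by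
      intro l hl; simp at hl; unfold dd; omega
    rw [Finset.sum_congr rfl this]
    exact Finset.sum_range_reflect (fun j => j) p
  have h4 : dd p p = 0 := by unfold dd; omega
  rw [h2, h3, h4]; ring

lemma TT_id (p : ℕ) : 3 * TT p = p * (p - 1) * (p - 2) := by
  induction p with
  | zero => simp [TT]
  | succ q ih =>
    have hg : 2 * ∑ k ∈ Finset.range q, k = q * (q - 1) := by
      have := Finset.sum_range_id_mul_two q
      omega
    have hstep : 3 * TT (q+1) = 3 * TT q + 3 * (q * (q - 1)) := by
      rw [TT_succ, Nat.mul_add, hg]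
    rw [hstep, ih]
    rcases q with _ | r
    · simp
    rcases r with _ | s
    · simp
    simp only [show s+1+1+1-2 = s+1 from rfl, show s+1+1-2 = s from rfl,
      show s+1+1+1-1 = s+1+1 from rfl, show s+1+1-1 = s+1 from rfl]
    ring

lemma strictMono_fin_le {p : ℕ} (f : Fin p → ℕ) (hf : StrictMono f) :
    ∀ d : ℕ, ∀ k l : Fin p, (l : ℕ) = (k : ℕ) + d → f k + d ≤ f l := by
  intro d
  induction d with
  | zero =>
    intro k l h
    have : k = l := Fin.ext (by omega)
    simp [this]
  | succ d ih =>
    intro k l h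
    have hkd : (k : ℕ) + d < p := by have := l.2; omega
    set l' : Fin p := ⟨(k : ℕ) + d, hkd⟩
    have h1 : f k + d ≤ f l' := ih k l' rfl
    have h2 : f l' < f l := hf (by simp [l', Fin.lt_def]; omega)
    omega

lemma idx_mono (P : Finset ℝ) (n : ℕ) (hn : 1 ≤ n)
    (hIcc : (↑P : Set ℝ) ⊆ Set.Icc 0 1)
    (hfil : ∀ i < n, (P.filter (fun x => (i : ℝ) / n ≤ x ∧ x < ((i : ℝ) + 1) / n)).card ≤ 1) :
    ∀ y ∈ P, ∀ z ∈ P, y < z → ⌊y * n⌋₊ < ⌊z * n⌋₊ := by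
  intro y hy z hz hyz
  have hnR : (0 : ℝ) < n := by exact_mod_cast hn
  obtain ⟨hy0, hy1⟩ := hIcc hy
  obtain ⟨hz0, hz1⟩ := hIcc hz
  have hy0n : (0:ℝ) ≤ y * n := mul_nonneg hy0 hnR.le
  have hz0n : (0:ℝ) ≤ z * n := mul_nonneg hz0 hnR.le
  have hmono : ⌊y * n⌋₊ ≤ ⌊z * n⌋₊ :=
    Nat.floor_le_floor (mul_le_mul_of_nonneg_right hyz.le hnR.le)
  rcases hmono.lt_or_eq with h | h
  · exact h
  exfalso
  set i := ⌊y * n⌋₊ with hi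
  have hylt1 : y < 1 := lt_of_lt_of_le hyz hz1
  have hiltn : i < n := by
    rw [hi]
    exact (Nat.floor_lt hy0n).2 (by nlinarith)
  have hfy1 : (i : ℝ) ≤ y * n := Nat.floor_le hy0n
  have hfy2 : y * n < i + 1 := Nat.lt_floor_add_one _
  have hfz1 : (i : ℝ) ≤ z * n := by rw [h] at hi ⊢; exact Nat.floor_le hz0n
  have hfz2 : z * n < i + 1 := by rw [h]; exact Nat.lt_floor_add_one _
  have hymem : y ∈ P.filter (fun x => (i : ℝ) / n ≤ x ∧ x < ((i : ℝ) + 1) / n) :=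
    Finset.mem_filter.2 ⟨hy, (div_le_iff₀ hnR).2 (by linarith), (lt_div_iff₀ hnR).2 (by linarith)⟩
  have hzmem : z ∈ P.filter (fun x => (i : ℝ) / n ≤ x ∧ x < ((i : ℝ) + 1) / n) :=
    Finset.mem_filter.2 ⟨hz, (div_le_iff₀ hnR).2 (by linarith), (lt_div_iff₀ hnR).2 (by linarith)⟩
  have : 1 < (P.filter (fun x => (i : ℝ) / n ≤ x ∧ x < ((i : ℝ) + 1) / n)).card :=
    Finset.one_lt_card.2 ⟨y, hymem, z, hzmem, hyz.ne⟩
  have := hfil i hiltn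
  omega

set_option maxHeartbeats 2000000 in
theorem stmt8 (n p : ℕ) (hp : 1 ≤ p) (hpn : p ≤ n) (P : Finset ℝ)
    (hP : IsPNLineMetric P p n) (H : Finset (ℝ × ℝ)) (hHP : H ⊆ P ×ˢ P)
    (hhop : HopConnected H P 2) :
    (1 / 16 : ℝ) * ((p : ℝ) ^ 2 / (n : ℝ)) * mstLine P ≤ lineWeight H := by
  obtain ⟨hcard, hIcc, hfil⟩ := hP
  have hn : 1 ≤ n := le_trans hp hpn
  have hnR : (0 : ℝ) < n := by exact_mod_cast hn
  have hpR : (1 : ℝ) ≤ p := by exact_mod_cast hp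
  have hpnR : (p : ℝ) ≤ n := by exact_mod_cast hpn
  have hne : P.Nonempty := Finset.card_pos.1 (by omega)
  -- diameter facts
  have hsup : sSup (↑P : Set ℝ) = P.max' hne := hne.csSup_eq_max'
  have hinf : sInf (↑P : Set ℝ) = P.min' hne := hne.csInf_eq_min'
  have hmaxmem := P.max'_mem hne
  have hminmem := P.min'_mem hne
  have hD0 : 0 ≤ mstLine P := by
    rw [mstLine, hsup, hinf]
    have := P.min'_le _ hmaxmem
    linarith
  have hD1 : mstLine P ≤ 1 := by
    rw [mstLine, hsup, hinf]
    have h1 := (hIcc hmaxmem).2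
    have h2 := (hIcc hminmem).1
    linarith
  have hW0 : 0 ≤ lineWeight H := lineWeight_nonneg H
  have hDW : mstLine P ≤ lineWeight H := by
    have := pair_le_weight (H := H) (hhop _ hminmem _ hmaxmem)
    rw [mstLine, hsup, hinf]
    have hml := P.min'_le _ hmaxmem
    rw [abs_of_nonpos (by linarith)] at this
    linarith
  by_cases hsmall : p < 12
  · -- small case : coefficient ≤ 1
    have hcoef : (1 / 16 : ℝ) * ((p : ℝ) ^ 2 / (n : ℝ)) ≤ 1 := by
      have h1 : (p : ℝ) ^ 2 / n ≤ p := by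
        rw [div_le_iff₀ hnR]
        have : (p:ℝ) ≤ 11 := by exact_mod_cast Nat.lt_succ_iff.1 hsmall
        nlinarith
      have : (p : ℝ) ≤ 11 := by exact_mod_cast Nat.lt_succ_iff.1 hsmall
      nlinarith
    have hcoef0 : 0 ≤ (1 / 16 : ℝ) * ((p : ℝ) ^ 2 / (n : ℝ)) := by positivity
    nlinarith
  push_neg at hsmall
  have hp12 : (12 : ℝ) ≤ p := by exact_mod_cast hsmall
  -- sorted enumeration
  set e := P.orderIsoOfFin hcard with he
  set x : Fin p → ℝ := fun k => (e k : ℝ) with hx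
  have hxmem : ∀ k, x k ∈ P := fun k => (e k).2
  have hxmono : StrictMono x := by
    intro a b hab
    exact e.strictMono hab
  set F : Fin p → ℕ := fun k => ⌊x k * n⌋₊ with hF
  have hFmono : StrictMono F := by
    intro a b hab
    exact idx_mono P n hn hIcc hfil _ (hxmem a) _ (hxmem b) (hxmono hab)
  -- gap bound
  have hgap : ∀ k l : Fin p, (k : ℕ) < l → ((dd k l : ℕ) : ℝ) ≤ n * (x l - x k) := by
    intro k l hkl
    have hdd : dd (k : ℕ) l = (l : ℕ) - k - 1 := by unfold dd; omega
    have hFle : F k + ((l : ℕ) - k) ≤ F l :=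
      strictMono_fin_le F hFmono ((l : ℕ) - k) k l (by omega)
    have hfl : (F l : ℝ) ≤ x l * n := Nat.floor_le
      (mul_nonneg (hIcc (hxmem l)).1 hnR.le)
    have hfk : x k * n < F k + 1 := Nat.lt_floor_add_one _
    have hcast : ((F k + ((l : ℕ) - k) : ℕ) : ℝ) ≤ (F l : ℝ) := by exact_mod_cast hFle
    have hsub : (((l : ℕ) - k : ℕ) : ℝ) = (l : ℕ) - (k : ℕ) :=
      Nat.cast_sub hkl.le
    rw [hdd]
    have hsub2 : (((l : ℕ) - k - 1 : ℕ) : ℝ) = (l : ℕ) - (k : ℕ) - 1 := by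
      rw [Nat.cast_sub (show 1 ≤ (l:ℕ) - k by omega), Nat.cast_sub hkl.le, Nat.cast_one]
    rw [hsub2]
    push_cast at hcast
    rw [hsub] at hcast
    nlinarith
  -- the double sum
  set S : ℝ := ∑ k : Fin p, ∑ l : Fin p, |x k - x l| with hS
  have hTS : ((TT p : ℕ) : ℝ) ≤ n * S := by
    have : ((TT p : ℕ) : ℝ) = ∑ k : Fin p, ∑ l : Fin p, ((dd k l : ℕ) : ℝ) := by
      rw [TT]
      push_cast
      rw [Finset.sum_range fun k => ∑ l ∈ Finset.range p, ((dd k l : ℕ):ℝ)]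
      congr 1
      ext k
      rw [Finset.sum_range]
    rw [this, hS, Finset.mul_sum]
    refine Finset.sum_le_sum (fun k _ => ?_)
    rw [Finset.mul_sum]
    refine Finset.sum_le_sum (fun l _ => ?_)
    rcases lt_trichotomy (k : ℕ) (l : ℕ) with h | h | h
    · have := hgap k l h
      have hle : x k ≤ x l := (hxmono (Fin.lt_def.2 h)).le
      rw [abs_of_nonpos (by linarith), neg_sub]
      exact this
    · have : k = l := Fin.ext h
      subst this
      simp [dd]
    · have hgl := hgap l k h
      have hddsymm : dd (k:ℕ) l = dd (l:ℕ) k := by unfold dd; omega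
      have hle : x l ≤ x k := (hxmono (Fin.lt_def.2 h)).le
      rw [abs_of_nonneg (by linarith), hddsymm]
      exact hgl
  -- S ≤ 4 p W
  have hS4 : S ≤ 4 * p * lineWeight H := by
    have hstep : S ≤ ∑ k : Fin p, ∑ l : Fin p, (incWeight H (x k) + incWeight H (x l)) := by
      refine Finset.sum_le_sum (fun k _ => Finset.sum_le_sum (fun l _ => ?_))
      exact pair_bound (hhop _ (hxmem k) _ (hxmem l))
    have hsum : ∑ k : Fin p, ∑ l : Fin p, (incWeight H (x k) + incWeight H (x l))
        = 2 * p * ∑ k : Fin p, incWeight H (x k) := by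
      calc ∑ k : Fin p, ∑ l : Fin p, (incWeight H (x k) + incWeight H (x l))
          = ∑ k : Fin p, ((p : ℝ) * incWeight H (x k) + ∑ l : Fin p, incWeight H (x l)) :=
            Finset.sum_congr rfl (fun k _ => by
              rw [Finset.sum_add_distrib, Finset.sum_const, Finset.card_univ,
                Fintype.card_fin, nsmul_eq_mul])
        _ = (p : ℝ) * (∑ k : Fin p, incWeight H (x k))
              + (p : ℝ) * (∑ l : Fin p, incWeight H (x l)) := by
            rw [Finset.sum_add_distrib, ← Finset.mul_sum, Finset.sum_const,
              Finset.card_univ, Fintype.card_fin, nsmul_eq_mul]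
        _ = 2 * p * ∑ k : Fin p, incWeight H (x k) := by ring
    have hbij : ∑ k : Fin p, incWeight H (x k) = ∑ u ∈ P, incWeight H u := by
      rw [← Finset.sum_coe_sort P (incWeight H)]
      exact Equiv.sum_comp e.toEquiv (fun u => incWeight H (u : ℝ))
    have hinc := sum_inc_le H P
    rw [hsum, hbij] at hstep
    calc S ≤ 2 * p * ∑ u ∈ P, incWeight H u := hstep
      _ ≤ 2 * p * (2 * lineWeight H) := by
          apply mul_le_mul_of_nonneg_left hinc
          positivity
      _ = 4 * p * lineWeight H := by ring
  -- cast of TT identity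
  have hTTcast : (p : ℝ) * ((p:ℝ) - 1) * ((p:ℝ) - 2) = 3 * ((TT p : ℕ) : ℝ) := by
    have := TT_id p
    have h1 : ((3 * TT p : ℕ) : ℝ) = ((p * (p-1) * (p-2) : ℕ) : ℝ) :=
      congrArg (fun m : ℕ => (m : ℝ)) this
    push_cast [Nat.cast_sub (show 1 ≤ p by omega), Nat.cast_sub (show 2 ≤ p by omega)] at h1
    linarith
  -- final arithmetic
  have hkey : (p : ℝ)^2 ≤ 16 * n * lineWeight H := by
    have h1 : (p:ℝ) * ((p:ℝ) - 1) * ((p:ℝ) - 2) ≤ 3 * (n * (4 * p * lineWeight H)) := by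
      rw [hTTcast]
      have : n * S ≤ n * (4 * p * lineWeight H) := mul_le_mul_of_nonneg_left hS4 hnR.le
      linarith
    nlinarith [mul_pos hnR (show (0:ℝ) < p by linarith)]
  have hfrac : (p:ℝ)^2 / n ≤ 16 * lineWeight H := by
    rw [div_le_iff₀ hnR]
    nlinarith
  have hfrac0 : 0 ≤ (p:ℝ)^2 / n := by positivity
  nlinarith
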